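/- Let S be a finite set of vectors in ℤ^n such that for every Q = (q_1, ..., q_n) in S, gcd(q_1, ..., q_n) = 1. Then there exists a homogeneous polynomial f in ℤ[x_1, ..., x_n] of degree d ≥ 1 such that f(Q) = 1 for every Q in S. -/

import Mathlib

open MvPolynomial Finset

/-- Bezout over ℤ for a finset. -/
private lemma bezout_finset {ι : Type*} [DecidableEq ι] (s : Finset ι) (f : ι → ℤ) :
    ∃ b : ι → ℤ, ∑ i ∈ s, b i * f i = s.gcd f := by
  classical
  induction s using Finset.induction_on with
  | empty => exact ⟨0, by simp⟩
  | @insert a s ha ih =>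
    obtain ⟨b, hb⟩ := ih
    obtain ⟨x, y, hxy⟩ := exists_gcd_eq_mul_add_mul (f a) (s.gcd f)
    refine ⟨fun i => if i = a then x else y * b i, ?_⟩
    rw [Finset.sum_insert ha, Finset.gcd_insert, hxy, ← hb, Finset.sum_mul]
    simp only [if_true]
    congr 1
    · ring
    · refine Finset.sum_congr rfl fun i hi => ?_
      rw [if_neg (fun h : i = a => ha (h ▸ hi))]
      ring

/-- Evaluation of a homogeneous polynomial at a scaled point. -/
private lemma eval_scale {n : ℕ} {R : Type*} [CommSemiring R] {f : MvPolynomial (Fin n) R}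
    {d : ℕ} (hf : f.IsHomogeneous d) (r : R) (x : Fin n → R) :
    eval (fun i => r * x i) f = r ^ d * eval x f := by
  rw [eval_eq', eval_eq', Finset.mul_sum]
  refine Finset.sum_congr rfl fun c hc => ?_
  have hdeg : Finsupp.degree c = d := by
    by_contra h
    exact (MvPolynomial.mem_support_iff.mp hc) (hf.coeff_eq_zero h)
  have hsum : ∑ i, c i = d := by
    rw [← hdeg, Finsupp.degree]
    exact (Finset.sum_subset (Finset.subset_univ _)
      (fun i _ hi => Finsupp.notMem_support_iff.mp hi)).symm
  calc coeff c f * ∏ i, (r * x i) ^ c i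
      = coeff c f * ((∏ i, r ^ c i) * ∏ i, x i ^ c i) := by
        rw [← Finset.prod_mul_distrib]; simp_rw [mul_pow]
    _ = r ^ d * (coeff c f * ∏ i, x i ^ c i) := by
        rw [Finset.prod_pow_eq_pow_sum, hsum]; ring

/-- The linear form with coefficients `b`. -/
private noncomputable def linForm {n : ℕ} (b : Fin n → ℤ) : MvPolynomial (Fin n) ℤ :=
  ∑ i, C (b i) * X i

private lemma linForm_isHomogeneous {n : ℕ} (b : Fin n → ℤ) :
    (linForm b).IsHomogeneous 1 :=
  MvPolynomial.IsHomogeneous.sum _ _ _ fun i _ => isHomogeneous_C_mul_X (b i) i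

private lemma eval_linForm {n : ℕ} (b x : Fin n → ℤ) :
    eval x (linForm b) = ∑ i, b i * x i := by
  simp [linForm]

/-- For primitive `P, Q` and homogeneous `f` with `f(P) = 1`, there is a linear form
vanishing at `P` whose value at `Q` is coprime to `f(Q)`. -/
private lemma exists_vanishing_form {n : ℕ} (P Q : Fin n → ℤ)
    (hP : Finset.univ.gcd P = 1) (hQ : Finset.univ.gcd Q = 1)
    {f : MvPolynomial (Fin n) ℤ} {d : ℕ} (hf : f.IsHomogeneous d)
    (hfP : eval P f = 1) :
    ∃ A : MvPolynomial (Fin n) ℤ, A.IsHomogeneous 1 ∧ eval P A = 0 ∧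
      IsCoprime (eval Q f) (eval Q A) := by
  classical
  set D : Fin n × Fin n → ℤ := fun ij => P ij.2 * Q ij.1 - P ij.1 * Q ij.2 with hD
  obtain ⟨a, ha⟩ := bezout_finset Finset.univ D
  set A : MvPolynomial (Fin n) ℤ :=
    ∑ ij : Fin n × Fin n, C (a ij) * (C (P ij.2) * X ij.1 - C (P ij.1) * X ij.2) with hA
  have hhom : A.IsHomogeneous 1 := by
    refine MvPolynomial.IsHomogeneous.sum _ _ _ fun ij _ => ?_
    exact (((isHomogeneous_X ℤ ij.1).C_mul _).sub ((isHomogeneous_X ℤ ij.2).C_mul _)).C_mul _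
  have hevalP : eval P A = 0 := by
    rw [hA]
    simp only [map_sum, map_mul, map_sub, eval_C, eval_X]
    refine Finset.sum_eq_zero fun ij _ => ?_
    ring
  have hevalQ : eval Q A = Finset.univ.gcd D := by
    rw [hA, ← ha]
    simp only [map_sum, map_mul, map_sub, eval_C, eval_X, hD]
  refine ⟨A, hhom, hevalP, ?_⟩
  rw [hevalQ, Int.isCoprime_iff_gcd_eq_one]
  by_contra hne
  obtain ⟨p, hp, hpdvd⟩ := Nat.exists_prime_and_dvd hne
  have hpc : (p : ℤ) ∣ eval Q f := by
    have h1 : (p : ℤ) ∣ (Int.gcd (eval Q f) (Finset.univ.gcd D) : ℤ) := Int.natCast_dvd_natCast.mpr hpdvd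
    exact h1.trans (Int.gcd_dvd_left _ _)
  have hpg : ∀ ij : Fin n × Fin n, (p : ℤ) ∣ D ij := by
    intro ij
    have h1 : (p : ℤ) ∣ (Int.gcd (eval Q f) (Finset.univ.gcd D) : ℤ) := Int.natCast_dvd_natCast.mpr hpdvd
    exact (h1.trans (Int.gcd_dvd_right _ _)).trans (Finset.gcd_dvd (Finset.mem_univ ij))
  haveI : Fact p.Prime := ⟨hp⟩
  -- work in ZMod p
  set φ : ℤ →+* ZMod p := Int.castRingHom (ZMod p)
  have hPbar : ∃ i, (P i : ZMod p) ≠ 0 := by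
    by_contra h
    push_neg at h
    have : (p : ℤ) ∣ Finset.univ.gcd P := Finset.dvd_gcd fun i _ =>
      (ZMod.intCast_zmod_eq_zero_iff_dvd _ _).mp (h i)
    rw [hP] at this
    exact hp.one_lt.ne' ((Nat.dvd_one.mp (Int.ofNat_dvd.mp (by exact_mod_cast this))))
  have hQbar : ∃ i, (Q i : ZMod p) ≠ 0 := by
    by_contra h
    push_neg at h
    have : (p : ℤ) ∣ Finset.univ.gcd Q := Finset.dvd_gcd fun i _ =>
      (ZMod.intCast_zmod_eq_zero_iff_dvd _ _).mp (h i)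
    rw [hQ] at this
    exact hp.one_lt.ne' ((Nat.dvd_one.mp (Int.ofNat_dvd.mp (by exact_mod_cast this))))
  obtain ⟨i0, hi0⟩ := hPbar
  obtain ⟨j0, hj0⟩ := hQbar
  have hminor : ∀ ij : Fin n × Fin n, (P ij.2 : ZMod p) * Q ij.1 = (P ij.1 : ZMod p) * Q ij.2 := by
    intro ij
    have h0 := (ZMod.intCast_zmod_eq_zero_iff_dvd _ _).mpr (hpg ij)
    simp only [hD] at h0
    push_cast at h0
    linear_combination h0
  set lam : ZMod p := (Q i0 : ZMod p) * (P i0 : ZMod p)⁻¹ with hlam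
  have hQlam : ∀ j, (Q j : ZMod p) = lam * P j := by
    intro j
    have h := hminor (j, i0)
    rw [hlam]
    field_simp
    linear_combination h
  have hlamne : lam ≠ 0 := by
    intro h0
    apply hj0
    rw [hQlam j0, h0, zero_mul]
  have hcomm : ∀ (x : Fin n → ℤ) (g : MvPolynomial (Fin n) ℤ),
      ((eval x g : ℤ) : ZMod p) = eval (fun i => ((x i : ℤ) : ZMod p)) (map φ g) := by
    intro x g
    show φ (eval x g) = _
    rw [← eval₂_id (g := x), eval₂_comp_left φ (RingHom.id ℤ) x, eval₂_eq_eval_map]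
    rfl
  have hczero : ((eval Q f : ℤ) : ZMod p) = 0 := (ZMod.intCast_zmod_eq_zero_iff_dvd _ _).mpr hpc
  have hcval : ((eval Q f : ℤ) : ZMod p) = lam ^ d := by
    rw [hcomm Q f]
    have hfun : (fun i => ((Q i : ℤ) : ZMod p)) = fun i => lam * ((P i : ZMod p)) := by
      funext i; exact hQlam i
    rw [hfun, eval_scale (hf.map φ) lam (fun i => ((P i : ℤ) : ZMod p)), ← hcomm P f, hfP]
    simp
  rw [hczero] at hcval
  exact pow_ne_zero d hlamne hcval.symm

/-- If `c` is coprime to `M`, some positive power of `c` is `1` mod `M`. -/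
private lemma exists_pow_sub_one_dvd {c M : ℤ} (h : IsCoprime c M) :
    ∃ k : ℕ, 1 ≤ k ∧ M ∣ c ^ k - 1 := by
  rcases Nat.eq_zero_or_pos M.natAbs with hm | hm
  · have hM0 : M = 0 := Int.natAbs_eq_zero.mp hm
    subst hM0
    have hc : IsUnit c := isCoprime_zero_right.mp h
    rcases Int.isUnit_iff.mp hc with rfl | rfl
    · exact ⟨2, by norm_num⟩
    · exact ⟨2, by norm_num⟩
  · set m := M.natAbs with hmdef
    haveI : NeZero m := ⟨hm.ne'⟩
    have hcop : Nat.Coprime c.natAbs m := Int.isCoprime_iff_gcd_eq_one.mp h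
    set x : (ZMod m)ˣ := ZMod.unitOfCoprime c.natAbs hcop
    have hx : ((c.natAbs : ZMod m)) ^ (Nat.totient m) = 1 := by
      rw [← ZMod.coe_unitOfCoprime c.natAbs hcop, ← Units.val_pow_eq_pow_val,
        ZMod.pow_totient, Units.val_one]
    have hdvd1 : (m : ℤ) ∣ (c.natAbs : ℤ) ^ (Nat.totient m) - 1 := by
      rw [← ZMod.intCast_zmod_eq_zero_iff_dvd, Int.cast_sub, Int.cast_pow, Int.cast_one,
        Int.cast_natCast, hx, sub_self]
    have hsq : ((c.natAbs : ℤ)) ^ 2 = c ^ 2 := by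
      rw [sq, sq]
      exact_mod_cast Int.natAbs_mul_self (a := c)
    refine ⟨2 * Nat.totient m, by have := Nat.totient_pos.mpr hm; omega, ?_⟩
    have h2 : c ^ (2 * Nat.totient m) = ((c.natAbs : ℤ) ^ (Nat.totient m)) ^ 2 := by
      calc c ^ (2 * Nat.totient m) = (c ^ 2) ^ (Nat.totient m) := by rw [← pow_mul]
        _ = (((c.natAbs : ℤ)) ^ 2) ^ (Nat.totient m) := by rw [hsq]
        _ = ((c.natAbs : ℤ) ^ (Nat.totient m)) ^ 2 := by
            rw [← pow_mul, ← pow_mul, mul_comm]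
    rw [h2]
    have : (c.natAbs : ℤ) ^ (Nat.totient m) - 1 ∣ ((c.natAbs : ℤ) ^ (Nat.totient m)) ^ 2 - 1 := by
      have := sub_dvd_pow_sub_pow ((c.natAbs : ℤ) ^ (Nat.totient m)) 1 2
      simpa using this
    exact Int.natAbs_dvd.mp (hdvd1.trans this)

/-- Induction step: extend an interpolating homogeneous polynomial to one more point. -/
private lemma interpolation_step {n : ℕ} (S : Finset (Fin n → ℤ)) (Q : Fin n → ℤ)
    (hQ : Finset.univ.gcd Q = 1) (hSprim : ∀ P ∈ S, Finset.univ.gcd P = 1)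
    {f : MvPolynomial (Fin n) ℤ} {d : ℕ} (hd : 1 ≤ d) (hf : f.IsHomogeneous d)
    (hfS : ∀ P ∈ S, eval P f = 1) :
    ∃ (F : MvPolynomial (Fin n) ℤ) (e : ℕ), 1 ≤ e ∧ F.IsHomogeneous e ∧
      eval Q F = 1 ∧ ∀ P ∈ S, eval P F = 1 := by
  classical
  -- choose a vanishing form for each point of S
  have hchoice : ∀ P : Fin n → ℤ, ∃ A : MvPolynomial (Fin n) ℤ, P ∈ S →
      (A.IsHomogeneous 1 ∧ eval P A = 0 ∧ IsCoprime (eval Q f) (eval Q A)) := by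
    intro P
    by_cases hPS : P ∈ S
    · obtain ⟨A, h1, h2, h3⟩ := exists_vanishing_form P Q (hSprim P hPS) hQ hf (hfS P hPS)
      exact ⟨A, fun _ => ⟨h1, h2, h3⟩⟩
    · exact ⟨0, fun h => absurd h hPS⟩
  choose A hA using hchoice
  set c : ℤ := eval Q f with hc
  set s : ℕ := S.card with hs
  set C₀ : MvPolynomial (Fin n) ℤ := ∏ P ∈ S, A P with hC₀
  have hC₀hom : C₀.IsHomogeneous s := by
    have := MvPolynomial.IsHomogeneous.prod S A (fun _ => 1)
      (fun P hP => (hA P hP).1)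
    simpa using this
  have hC₀S : ∀ P ∈ S, eval P C₀ = 0 := by
    intro P hP
    rw [hC₀, map_prod]
    exact Finset.prod_eq_zero hP (hA P hP).2.1
  set M : ℤ := eval Q C₀ with hM
  have hcop : IsCoprime c M := by
    rw [hM, hC₀, map_prod]
    exact IsCoprime.prod_right fun P hP => (hA P hP).2.2
  obtain ⟨k0, hk0pos, hk0⟩ := exists_pow_sub_one_dvd hcop
  set k : ℕ := k0 * (s + 1) with hk
  have hkdvd : M ∣ c ^ k - 1 := by
    have := pow_one_sub_dvd_pow_mul_sub_one c k0 (s + 1)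
    exact hk0.trans (by simpa using this)
  obtain ⟨u, hu⟩ := hkdvd
  set e : ℕ := k * d with he
  have hks : s ≤ e := by
    have h1 : s + 1 ≤ k := by
      calc s + 1 = 1 * (s + 1) := (one_mul _).symm
        _ ≤ k0 * (s + 1) := Nat.mul_le_mul_right _ hk0pos
    calc s ≤ k := by omega
      _ = k * 1 := (mul_one k).symm
      _ ≤ k * d := Nat.mul_le_mul_left _ hd
  -- linear form with value 1 at Q
  obtain ⟨b, hb⟩ := bezout_finset Finset.univ Q
  rw [hQ] at hb
  set L : MvPolynomial (Fin n) ℤ := linForm b with hL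
  have hLQ : eval Q L = 1 := by rw [hL, eval_linForm, hb]
  set F : MvPolynomial (Fin n) ℤ := f ^ k - C u * (L ^ (e - s) * C₀) with hF
  refine ⟨F, e, le_trans hd (Nat.le_mul_of_pos_left d (Nat.mul_pos hk0pos (Nat.succ_pos s))), ?_, ?_, ?_⟩
  · -- homogeneity
    have h1 : (f ^ k).IsHomogeneous e := by rw [he, mul_comm]; exact hf.pow k
    have h2 : (C u * (L ^ (e - s) * C₀)).IsHomogeneous e := by
      have hL' : (L ^ (e - s)).IsHomogeneous (e - s) := by
        simpa using (linForm_isHomogeneous b).pow (e - s)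
      have := (hL'.mul hC₀hom).C_mul u
      rwa [Nat.sub_add_cancel hks] at this
    exact h1.sub h2
  · -- value at Q
    rw [hF]
    simp only [map_sub, map_mul, map_pow, eval_C]
    rw [hLQ, ← hM, ← hc]
    linear_combination hu
  · -- values on S
    intro P hP
    rw [hF]
    simp only [map_sub, map_mul, map_pow, eval_C]
    rw [hC₀S P hP, hfS P hP]
    ring

/-- Interpolation over ℤ: if every vector in the finite set `S ⊆ ℤ^n` has
coordinates with gcd equal to 1, then there is a nonconstant homogeneous
polynomial over ℤ evaluating to 1 at each point of `S`. -/
theorem interpolation_int (n : ℕ) (S : Finset (Fin n → ℤ))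
    (hS : ∀ Q ∈ S, Finset.univ.gcd Q = 1) :
    ∃ (f : MvPolynomial (Fin n) ℤ) (d : ℕ), 1 ≤ d ∧ f.IsHomogeneous d ∧
      ∀ Q ∈ S, MvPolynomial.eval Q f = 1 := by
  classical
  induction S using Finset.induction_on with
  | empty => exact ⟨0, 1, le_refl 1, MvPolynomial.isHomogeneous_zero _ _ 1, by simp⟩
  | @insert Q S hQS ih =>
    have hSprim : ∀ P ∈ S, Finset.univ.gcd P = 1 := fun P hP =>
      hS P (Finset.mem_insert_of_mem hP)
    obtain ⟨f, d, hd, hf, hfS⟩ := ih hSprim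
    obtain ⟨F, e, he, hF, hFQ, hFS⟩ := interpolation_step S Q
      (hS Q (Finset.mem_insert_self Q S)) hSprim hd hf hfS
    refine ⟨F, e, he, hF, ?_⟩
    intro P hP
    rcases Finset.mem_insert.mp hP with rfl | hP'
    · exact hFQ
    · exact hFS P hP'
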